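/- In the ring of 3×3 real matrices, let x_1(a) = I + a·E_{12} and x_2(a) = I + a·E_{23}. For all positive reals a, b there exists a unique pair of positive reals (a', b') such that x_1(a)·x_2(b)·x_1(b)·x_2(a) = x_2(a')·x_1(b')·x_2(b')·x_1(a'); explicitly, setting δ = a^2 + 2ab (so δ > 0), one has b' = √δ and a' = b^2/(a + b + √δ), where √δ is the positive square root of δ. -/

import Mathlib

/-- The Chevalley generator `x₁(a) = I + a·E₁₂` of the upper unitriangular subgroup of `SL₃(ℝ)`. -/
def x1 (a : ℝ) : Matrix (Fin 3) (Fin 3) ℝ := !![1, a, 0; 0, 1, 0; 0, 0, 1]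

/-- The Chevalley generator `x₂(a) = I + a·E₂₃` of the upper unitriangular subgroup of `SL₃(ℝ)`. -/
def x2 (a : ℝ) : Matrix (Fin 3) (Fin 3) ℝ := !![1, 0, 0; 0, 1, a; 0, 0, 1]

lemma prodL (a b : ℝ) : x1 a * x2 b * x1 b * x2 a =
    !![1, a+b, a^2+2*a*b; 0, 1, a+b; 0, 0, 1] := by
  simp [x1, x2, Matrix.mul_fin_three]; ring_nf; simp

lemma prodR (c d : ℝ) : x2 c * x1 d * x2 d * x1 c =
    !![1, d+c, d^2; 0, 1, c+d; 0, 0, 1] := by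
  simp [x1, x2, Matrix.mul_fin_three]; ring_nf; simp

/-- Lusztig 4.3(ii) and 4.4: for `a, b > 0` there is a unique pair of positive reals
`(a', b')` with `x₁(a)x₂(b)x₁(b)x₂(a) = x₂(a')x₁(b')x₂(b')x₁(a')`; explicitly, with
`δ = a² + 2ab > 0`, it is given by `b' = √δ` and `a' = b²/(a + b + √δ)`. -/
theorem transition_A2_twisted (a b : ℝ) (ha : 0 < a) (hb : 0 < b) :
    0 < a ^ 2 + 2 * a * b ∧
    (∃! p : ℝ × ℝ, 0 < p.1 ∧ 0 < p.2 ∧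
      x1 a * x2 b * x1 b * x2 a = x2 p.1 * x1 p.2 * x2 p.2 * x1 p.1) ∧
    x1 a * x2 b * x1 b * x2 a =
      x2 (b ^ 2 / (a + b + Real.sqrt (a ^ 2 + 2 * a * b))) *
        x1 (Real.sqrt (a ^ 2 + 2 * a * b)) *
        x2 (Real.sqrt (a ^ 2 + 2 * a * b)) *
        x1 (b ^ 2 / (a + b + Real.sqrt (a ^ 2 + 2 * a * b))) := by
  have hδ : 0 < a ^ 2 + 2 * a * b := by positivity
  set s := Real.sqrt (a ^ 2 + 2 * a * b) with hs
  have hs2 : s ^ 2 = a ^ 2 + 2 * a * b := Real.sq_sqrt hδ.le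
  have hspos : 0 < s := Real.sqrt_pos.mpr hδ
  have hslt : s < a + b := by
    nlinarith [hs2, hspos]
  have hsum : 0 < a + b + s := by linarith
  have ha' : b ^ 2 / (a + b + s) = a + b - s := by
    field_simp
    nlinarith [hs2]
  have hmain : x1 a * x2 b * x1 b * x2 a =
      x2 (b ^ 2 / (a + b + s)) * x1 s * x2 s * x1 (b ^ 2 / (a + b + s)) := by
    rw [prodL, prodR, ha', hs2]
    ring_nf
  refine ⟨hδ, ⟨(b ^ 2 / (a + b + s), s), ⟨by positivity, hspos, hmain⟩, ?_⟩, hmain⟩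
  rintro ⟨c, d⟩ ⟨hc, hd, heq⟩
  rw [prodL, prodR] at heq
  have h1 : d + c = a + b := by
    have := congrFun (congrFun heq 0) 1
    simpa using this.symm
  have h2 : d ^ 2 = a ^ 2 + 2 * a * b := by
    have := congrFun (congrFun heq 0) 2
    simpa using this.symm
  have hdeq : d = s := by
    have : d = Real.sqrt (d ^ 2) := (Real.sqrt_sq hd.le).symm
    rw [this, h2, hs]
  have : c = b ^ 2 / (a + b + s) := by rw [ha']; linarith [hdeq ▸ h1]
  simp [this, hdeq]
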